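/- Adding an edge (u, v) when there is no path from v back to u does not change strong connectivity: if v does not reach u under E, and E' is obtained from E by adding the edge (u, v), then for all vertices x, y, x and y are strongly connected under E' if and only if they are strongly connected under E. -/

import Mathlib

def SConn {V : Type*} (E : V → V → Prop) (x y : V) : Prop :=
  Relation.ReflTransGen E x y ∧ Relation.ReflTransGen E y x

lemma rtg_split {V : Type*} {E : V → V → Prop} {u v : V}
    {E' : V → V → Prop} (hE' : ∀ a b, E' a b ↔ E a b ∨ (a = u ∧ b = v))
    {x y : V} (h : Relation.ReflTransGen E' x y) :
    Relation.ReflTransGen E x y ∨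
      (Relation.ReflTransGen E x u ∧ Relation.ReflTransGen E v y) := by
  induction h with
  | refl => exact Or.inl .refl
  | tail _ hbc ih =>
    rcases (hE' _ _).1 hbc with h | ⟨rfl, rfl⟩
    · rcases ih with ih | ⟨h1, h2⟩
      · exact Or.inl (ih.tail h)
      · exact Or.inr ⟨h1, h2.tail h⟩
    · rcases ih with ih | ⟨h1, _⟩
      · exact Or.inr ⟨ih, .refl⟩
      · exact Or.inr ⟨h1, .refl⟩

theorem add_edge_no_back_path {V : Type*} (E : V → V → Prop) (u v : V)
    (hvu : ¬ Relation.ReflTransGen E v u)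
    (E' : V → V → Prop) (hE' : ∀ a b, E' a b ↔ E a b ∨ (a = u ∧ b = v)) :
    ∀ x y : V, SConn E' x y ↔ SConn E x y := by
  intro x y
  constructor
  · rintro ⟨hxy, hyx⟩
    rcases rtg_split hE' hxy with h1 | ⟨hxu, hvy⟩ <;>
      rcases rtg_split hE' hyx with h2 | ⟨hyu, hvx⟩
    · exact ⟨h1, h2⟩
    · exact absurd (hvx.trans h1 |>.trans hyu) hvu
    · exact absurd (hvy.trans h2 |>.trans hxu) hvu
    · exact absurd (hvx.trans hxu) hvu
  · rintro ⟨hxy, hyx⟩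
    have mono : ∀ {a b}, Relation.ReflTransGen E a b → Relation.ReflTransGen E' a b := by
      intro a b h
      exact Relation.ReflTransGen.mono (fun p q hpq => (hE' p q).2 (Or.inl hpq)) a b h
    exact ⟨mono hxy, mono hyx⟩
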